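/- There is c* > 0 such that for every σ ∈ (0, c*] and every c > 0 there is n₀ ∈ ℕ with the following property for all n ≥ n₀. Let 0 < p ≤ n^{σ−1} and let H ~ G(n,p). Then with probability at least 1 − c·n^{−14}: for every U ⊆ [n] with |U| ≤ 100·log n, the number of vertices v ∈ [n]∖U having at least 10 H-neighbours in U is at most 100·log n. (Lemma 6.8.) -/

import Mathlib

open scoped Classical ENNReal

noncomputable section

namespace Sandwich

variable {n : ℕ}

/-- The degree of the vertex `v` in the graph `G`. -/
def deg (G : SimpleGraph (Fin n)) (v : Fin n) : ℕ := Nat.card (G.neighborSet v)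

/-- `G` is a `d`-regular graph. -/
def IsRegularGraph (G : SimpleGraph (Fin n)) (d : ℕ) : Prop := ∀ v, deg G v = d

/-- The number of edges of `G`. -/
def edgeCount (G : SimpleGraph (Fin n)) : ℕ := G.edgeSet.ncard

/-- The probability of the event `P` under the probability mass function `μ`. -/
def prEvent {α : Type*} (μ : PMF α) (P : α → Prop) : ℝ≥0∞ := ∑' a, if P a then μ a else 0

/-- `μ` is the uniform distribution on the set `S`. -/
def IsUniformOn {α : Type*} (μ : PMF α) (S : Set α) : Prop :=
  ∀ a, μ a = if a ∈ S then (S.ncard : ℝ≥0∞)⁻¹ else 0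

/-- `P` lists the `k+1` vertices of a `(G₁,G₂)`-alternating path of length `k`: the vertices
are distinct and consecutive vertices are joined by an edge of `G₁` (for steps of even index)
or of `G₂` (for steps of odd index). -/
def IsAltSeq (G₁ G₂ : SimpleGraph (Fin n)) (k : ℕ) (P : Fin (k + 1) → Fin n) : Prop :=
  Function.Injective P ∧
    ∀ i : Fin k, if (i : ℕ) % 2 = 0 then G₁.Adj (P i.castSucc) (P i.succ)
      else G₂.Adj (P i.castSucc) (P i.succ)

/-- The number of `(G₁,G₂)`-alternating `x,y`-paths of length `k` with no internal vertex
in `Z`. -/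
def altPathCount (G₁ G₂ : SimpleGraph (Fin n)) (k : ℕ) (x y : Fin n) (Z : Set (Fin n)) : ℕ :=
  Nat.card {P : Fin (k + 1) → Fin n // IsAltSeq G₁ G₂ k P ∧ P 0 = x ∧ P (Fin.last k) = y ∧
    ∀ i : Fin (k + 1), i ≠ 0 → i ≠ Fin.last k → P i ∉ Z}

/-- The number of `(G₁,G₂)`-alternating paths of length `k` starting at `x`. -/
def altStartCount (G₁ G₂ : SimpleGraph (Fin n)) (k : ℕ) (x : Fin n) : ℕ :=
  Nat.card {P : Fin (k + 1) → Fin n // IsAltSeq G₁ G₂ k P ∧ P 0 = x}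

/-- The external neighbourhood `N_G(U)` of a set of vertices `U`. -/
def nbhd (G : SimpleGraph (Fin n)) (U : Set (Fin n)) : Set (Fin n) :=
  {v | v ∉ U ∧ ∃ u ∈ U, G.Adj u v}

/-- `e_G(U)`, the number of edges of `G` with both endpoints in `U`. -/
def edgesWithin (G : SimpleGraph (Fin n)) (U : Set (Fin n)) : ℕ :=
  {e ∈ G.edgeSet | ∀ v ∈ e, v ∈ U}.ncard

/-- `e_G(U,V) = |{(u,v) : u ∈ U, v ∈ V, uv ∈ E(G)}|`. -/
def edgesBetween (G : SimpleGraph (Fin n)) (U V : Set (Fin n)) : ℕ :=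
  {p : Fin n × Fin n | p.1 ∈ U ∧ p.2 ∈ V ∧ G.Adj p.1 p.2}.ncard

/-- `|E_{≥2,G}(U)|`, the number of edges `xy ∈ E(G)` with `x ∈ U`, `y ∉ U` such that some
`x' ∈ U ∖ {x}` also satisfies `x'y ∈ E(G)`. -/
def E2count (G : SimpleGraph (Fin n)) (U : Set (Fin n)) : ℕ :=
  {e : Sym2 (Fin n) | e ∈ G.edgeSet ∧ ∃ x y, e = s(x, y) ∧ x ∈ U ∧ y ∉ U ∧
    ∃ x' ∈ U, x' ≠ x ∧ G.Adj x' y}.ncard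

/-- `Σ_{u ∈ N_{F∖K}(v)} Σ_{u' ∈ N_K(u)} d_{F∖K}(u')`. -/
def doubleDegSum (F K : SimpleGraph (Fin n)) (v : Fin n) : ℝ :=
  ∑ u : Fin n, if (F \ K).Adj v u then
    ∑ u' : Fin n, if K.Adj u u' then (deg (F \ K) u' : ℝ) else 0
  else 0

/-- `μ` is the law of the binomial random graph `G(n,p)`. -/
def IsGnp (μ : PMF (SimpleGraph (Fin n))) (p : ℝ) : Prop :=
  ∀ G, μ G = ENNReal.ofReal (p ^ edgeCount G * (1 - p) ^ (n.choose 2 - edgeCount G))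

/-- `μ` is the law of `G(n,p)`, where `p` is truncated to `[0,1]` (so that `G(n,p)` is the
empty graph for `p ≤ 0` and the complete graph for `p ≥ 1`). -/
def IsGnpLaw (μ : PMF (SimpleGraph (Fin n))) (p : ℝ) : Prop :=
  IsGnp μ (max 0 (min p 1))

/-- `μ` is the law of `K + E`, where `E` includes each pair not in `E(K)` independently with
probability `p`. -/
def IsAddGnp (μ : PMF (SimpleGraph (Fin n))) (K : SimpleGraph (Fin n)) (p : ℝ) : Prop :=
  ∀ F, μ F = if K ≤ F then
      ENNReal.ofReal (p ^ (edgeCount F - edgeCount K) * (1 - p) ^ (n.choose 2 - edgeCount F))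
    else 0

/-- `ν` is the joint law of `(K, F)` where `K ~ G_d(n)` is a uniformly random `d`-regular graph
and `F = K + E`, `E` including each pair not in `E(K)` independently with probability `p`. -/
def IsRegAddGnp (ν : PMF (SimpleGraph (Fin n) × SimpleGraph (Fin n))) (d : ℕ) (p : ℝ) : Prop :=
  ∀ w, ν w = if IsRegularGraph w.1 d ∧ w.1 ≤ w.2 then
      ({G : SimpleGraph (Fin n) | IsRegularGraph G d}.ncard : ℝ≥0∞)⁻¹ *
        ENNReal.ofReal (p ^ (edgeCount w.2 - edgeCount w.1) *
          (1 - p) ^ (n.choose 2 - edgeCount w.2))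
    else 0

/-- `ν` is the joint law of an independent pair `(K, F)` with `K ~ G_d(n)` and `F ~ G(n,q)`. -/
def IsRegIndepGnp (ν : PMF (SimpleGraph (Fin n) × SimpleGraph (Fin n))) (d : ℕ) (q : ℝ) :
    Prop :=
  ∀ w, ν w = (if IsRegularGraph w.1 d then
      ({G : SimpleGraph (Fin n) | IsRegularGraph G d}.ncard : ℝ≥0∞)⁻¹ else 0) *
      ENNReal.ofReal (q ^ edgeCount w.2 * (1 - q) ^ (n.choose 2 - edgeCount w.2))



/-! ### Auxiliary lemmas for Lemma 6.8 -/

section Aux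

lemma prEvent_mono' {α : Type*} (μ : PMF α) {P Q : α → Prop} (h : ∀ a, P a → Q a) :
    prEvent μ P ≤ prEvent μ Q := by
  refine ENNReal.tsum_le_tsum fun a => ?_
  by_cases hP : P a
  · simp [hP, h a hP]
  · simp [hP]

lemma prEvent_union_le' {α : Type*} (μ : PMF α) {ι : Type*} (s : Finset ι) (P : ι → α → Prop) :
    prEvent μ (fun a => ∃ i ∈ s, P i a) ≤ ∑ i ∈ s, prEvent μ (P i) := by
  unfold prEvent
  rw [← Summable.tsum_finsetSum (fun i _ => ENNReal.summable)]
  refine ENNReal.tsum_le_tsum fun a => ?_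
  by_cases h : ∃ i ∈ s, P i a
  · obtain ⟨i, hi, hPi⟩ := h
    refine le_trans (le_of_eq (if_pos ⟨i, hi, hPi⟩)) ?_
    have h2 := Finset.single_le_sum (f := fun i => if P i a then μ a else 0)
      (fun j _ => zero_le (a := (fun i => if P i a then μ a else 0) j)) hi
    simpa [hPi] using h2
  · rw [if_neg h]
    exact zero_le

lemma prEvent_add_not' {α : Type*} (μ : PMF α) (P : α → Prop) :
    prEvent μ P + prEvent μ (fun a => ¬ P a) = 1 := by
  unfold prEvent
  rw [← ENNReal.tsum_add, ← μ.tsum_coe]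
  refine tsum_congr fun a => ?_
  by_cases h : P a <;> simp [h]

lemma edgeCount_eq_card_edgeFinset {n : ℕ} (G : SimpleGraph (Fin n)) :
    edgeCount G = G.edgeFinset.card := by
  simp [edgeCount, Set.ncard_eq_toFinset_card', SimpleGraph.edgeFinset]

lemma gnp_prob_superset {n : ℕ} {p : ℝ} (hp0 : 0 ≤ p) (hp1 : p ≤ 1)
    (μ : PMF (SimpleGraph (Fin n))) (hμ : IsGnp μ p)
    (E₀ : Finset (Sym2 (Fin n))) (hE : ∀ e ∈ E₀, ¬ e.IsDiag) :
    prEvent μ (fun H => ∀ e ∈ E₀, e ∈ H.edgeSet) = ENNReal.ofReal (p ^ E₀.card) := by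
  classical
  set N := n.choose 2 with hN
  set D : Finset (Sym2 (Fin n)) := Finset.univ.filter (fun e => ¬ e.IsDiag) with hD
  have hDcard : D.card = N := by
    rw [hD, ← Fintype.card_subtype, Sym2.card_subtype_not_diag, Fintype.card_fin]
  have hE₀D : E₀ ⊆ D := fun e he => Finset.mem_filter.mpr ⟨Finset.mem_univ _, hE e he⟩
  have hsub : ∀ G : SimpleGraph (Fin n), G.edgeFinset ⊆ D := by
    intro G e he
    exact Finset.mem_filter.mpr ⟨Finset.mem_univ _,
      G.not_isDiag_of_mem_edgeSet (SimpleGraph.mem_edgeFinset.mp he)⟩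
  have key : prEvent μ (fun H => ∀ e ∈ E₀, e ∈ H.edgeSet)
      = ENNReal.ofReal (∑ G : SimpleGraph (Fin n),
          if E₀ ⊆ G.edgeFinset then p ^ edgeCount G * (1 - p) ^ (N - edgeCount G) else 0) := by
    rw [prEvent, tsum_fintype, ENNReal.ofReal_sum_of_nonneg]
    · refine Finset.sum_congr rfl fun G _ => ?_
      have hcond : (∀ e ∈ E₀, e ∈ G.edgeSet) ↔ E₀ ⊆ G.edgeFinset := by
        constructor
        · intro h e he; exact SimpleGraph.mem_edgeFinset.mpr (h e he)
        · intro h e he; exact SimpleGraph.mem_edgeFinset.mp (h he)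
      by_cases h : E₀ ⊆ G.edgeFinset
      · rw [if_pos (hcond.mpr h), if_pos h, hμ G]
      · rw [if_neg (fun hh => h (hcond.mp hh)), if_neg h, ENNReal.ofReal_zero]
    · intro G _
      have h1p : 0 ≤ 1 - p := by linarith
      split
      · positivity
      · exact le_refl 0
  rw [key]
  congr 1
  have step1 : ∑ G : SimpleGraph (Fin n),
      (if E₀ ⊆ G.edgeFinset then p ^ edgeCount G * (1 - p) ^ (N - edgeCount G) else 0)
      = ∑ s ∈ D.powerset, (if E₀ ⊆ s then p ^ s.card * (1 - p) ^ (N - s.card) else 0) := by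
    refine Finset.sum_nbij' (i := fun G => G.edgeFinset)
      (j := fun s => SimpleGraph.fromEdgeSet ↑s) ?_ ?_ ?_ ?_ ?_
    · intro G _; exact Finset.mem_powerset.mpr (hsub G)
    · intro s _; exact Finset.mem_univ _
    · intro G _
      show SimpleGraph.fromEdgeSet ↑G.edgeFinset = G
      rw [SimpleGraph.coe_edgeFinset, SimpleGraph.fromEdgeSet_edgeSet]
    · intro s hs
      ext e
      simp only [SimpleGraph.mem_edgeFinset, SimpleGraph.edgeSet_fromEdgeSet, Set.mem_diff,
        Set.mem_setOf_eq, Finset.mem_coe]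
      constructor
      · exact fun h => h.1
      · intro he
        exact ⟨he, fun hdiag =>
          (Finset.mem_filter.mp (Finset.mem_powerset.mp hs he)).2 hdiag⟩
    · intro G _
      rw [edgeCount_eq_card_edgeFinset]
  rw [step1, ← Finset.sum_filter]
  have step2 : ∑ s ∈ (D.powerset).filter (fun s => E₀ ⊆ s),
      p ^ s.card * (1 - p) ^ (N - s.card)
      = ∑ t ∈ (D \ E₀).powerset, p ^ (E₀.card + t.card) * (1 - p) ^ ((D \ E₀).card - t.card) := by
    refine Finset.sum_nbij' (i := fun s => s \ E₀) (j := fun t => t ∪ E₀) ?_ ?_ ?_ ?_ ?_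
    · intro s hs
      obtain ⟨hs1, hs2⟩ := Finset.mem_filter.mp hs
      exact Finset.mem_powerset.mpr
        (Finset.sdiff_subset_sdiff (Finset.mem_powerset.mp hs1) le_rfl)
    · intro t ht
      refine Finset.mem_filter.mpr ⟨Finset.mem_powerset.mpr ?_, Finset.subset_union_right⟩
      exact Finset.union_subset
        ((Finset.mem_powerset.mp ht).trans (Finset.sdiff_subset)) hE₀D
    · intro s hs
      show s \ E₀ ∪ E₀ = s
      exact Finset.sdiff_union_of_subset (Finset.mem_filter.mp hs).2
    · intro t ht
      have hdisj : Disjoint t E₀ :=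
        Finset.disjoint_of_subset_left (Finset.mem_powerset.mp ht) (Finset.sdiff_disjoint)
      show (t ∪ E₀) \ E₀ = t
      rw [Finset.union_sdiff_distrib, Finset.sdiff_self, Finset.union_empty,
        Finset.sdiff_eq_self_iff_disjoint.mpr hdisj]
    · intro s hs
      obtain ⟨hs1, hs2⟩ := Finset.mem_filter.mp hs
      have hc : s.card = E₀.card + (s \ E₀).card := by
        rw [add_comm, Finset.card_sdiff_add_card_eq_card hs2]
      have hc2 : N - s.card = (D \ E₀).card - (s \ E₀).card := by
        have h1 : (D \ E₀).card = N - E₀.card := by rw [Finset.card_sdiff_of_subset hE₀D, hDcard]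
        have h2 : E₀.card ≤ s.card := Finset.card_le_card hs2
        have h3 : s.card ≤ N := hDcard ▸ Finset.card_le_card (Finset.mem_powerset.mp hs1)
        rw [h1, hc]
        omega
      show p ^ s.card * (1 - p) ^ (N - s.card)
        = p ^ (E₀.card + (s \ E₀).card) * (1 - p) ^ ((D \ E₀).card - (s \ E₀).card)
      rw [hc2, ← hc]
  rw [step2]
  set B := D \ E₀ with hB
  have final : ∑ t ∈ B.powerset, p ^ (E₀.card + t.card) * (1 - p) ^ (B.card - t.card)
      = p ^ E₀.card := by
    have hcards : ∀ t ∈ B.powerset, p ^ (E₀.card + t.card) * (1 - p) ^ (B.card - t.card)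
        = p ^ E₀.card * (p ^ t.card * (1 - p) ^ (B \ t).card) := by
      intro t ht
      rw [Finset.card_sdiff_of_subset (Finset.mem_powerset.mp ht), pow_add, mul_assoc]
    rw [Finset.sum_congr rfl hcards, ← Finset.mul_sum]
    have hid := (Finset.prod_add (fun _ : Sym2 (Fin n) => p) (fun _ => 1 - p) B).symm
    simp only [Finset.prod_const] at hid
    rw [hid]
    have hone : p + (1 - p) = 1 := by ring
    rw [hone, one_pow, mul_one]
  rw [final]

/-- Witness structures for the union bound. -/
abbrev Wit (n m : ℕ) : Type := (Fin m → Fin n) × (Fin m → Fin n) × (Fin m → Fin 10 → Fin m)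

def wEdge {n m : ℕ} (ω : Wit n m) : Fin m × Fin 10 → Sym2 (Fin n) :=
  fun q => s(ω.1 q.1, ω.2.1 (ω.2.2 q.1 q.2))

def WitGood {n m : ℕ} (ω : Wit n m) : Prop :=
  Function.Injective (wEdge ω) ∧ ∀ i j, ω.1 i ≠ ω.2.1 (ω.2.2 i j)

def WitEvent {n m : ℕ} (ω : Wit n m) (H : SimpleGraph (Fin n)) : Prop :=
  ∀ i j, H.Adj (ω.1 i) (ω.2.1 (ω.2.2 i j))

lemma witness_exists {n m : ℕ} (H : SimpleGraph (Fin n)) (U : Set (Fin n))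
    (hU : U.ncard < m)
    (hB : m ≤ {v : Fin n | v ∉ U ∧ 10 ≤ (H.neighborSet v ∩ U).ncard}.ncard) :
    ∃ ω : Wit n m, WitGood ω ∧ WitEvent ω H := by
  classical
  rcases Nat.eq_zero_or_pos m with hm | hm
  · subst hm
    refine ⟨(Fin.elim0, Fin.elim0, Fin.elim0), ⟨fun q => q.1.elim0, fun i => i.elim0⟩,
      fun i => i.elim0⟩
  set B := {v : Fin n | v ∉ U ∧ 10 ≤ (H.neighborSet v ∩ U).ncard} with hBdef
  have hBfin : B.Finite := Set.toFinite _
  have hBcard : m ≤ hBfin.toFinset.card := by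
    rwa [← Set.ncard_eq_toFinset_card]
  obtain ⟨W, hWsub, hWcard⟩ := Finset.exists_subset_card_eq hBcard
  set f : Fin m → Fin n := fun i => ((W.orderIsoOfFin hWcard) i : Fin n) with hf
  have hfInj : Function.Injective f := fun a b hab =>
    (W.orderIsoOfFin hWcard).injective (Subtype.coe_injective hab)
  have hfB : ∀ i, f i ∈ B := fun i =>
    hBfin.mem_toFinset.mp (hWsub ((W.orderIsoOfFin hWcard) i).2)
  have hfU : ∀ i, f i ∉ U := fun i => (hfB i).1
  have hfnb : ∀ i, 10 ≤ (H.neighborSet (f i) ∩ U).ncard := fun i => (hfB i).2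
  have hUfin : U.Finite := Set.toFinite _
  set UF := hUfin.toFinset with hUF
  set k := UF.card with hk
  have hkm : k ≤ m := by
    have : U.ncard = k := Set.ncard_eq_toFinset_card U hUfin
    omega
  have hk10 : 10 ≤ k := by
    have h1 := hfnb ⟨0, hm⟩
    have h2 : (H.neighborSet (f ⟨0, hm⟩) ∩ U).ncard ≤ U.ncard :=
      Set.ncard_le_ncard Set.inter_subset_right (Set.toFinite _)
    have : U.ncard = k := Set.ncard_eq_toFinset_card U hUfin
    omega
  have hkpos : 0 < k := by omega
  set u : Fin m → Fin n :=
    fun i => ((UF.orderIsoOfFin hk.symm) ⟨min i (k - 1), by omega⟩ : Fin n) with hu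
  have huU : ∀ i, u i ∈ U := fun i =>
    hUfin.mem_toFinset.mp ((UF.orderIsoOfFin hk.symm) _).2
  have huSurj : ∀ t ∈ UF, ∃ a : Fin m, u a = t := by
    intro t ht
    set x := (UF.orderIsoOfFin hk.symm).symm ⟨t, ht⟩ with hx
    refine ⟨⟨(x : ℕ), lt_of_lt_of_le x.2 hkm⟩, ?_⟩
    have hxeq : (⟨min ((x : ℕ)) (k - 1), by omega⟩ : Fin k) = x := by
      apply Fin.ext
      have := x.2
      simp only []
      omega
    show ((UF.orderIsoOfFin hk.symm) ⟨min ((x : ℕ)) (k - 1), by omega⟩ : Fin n) = t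
    rw [hxeq, hx, OrderIso.apply_symm_apply]
  have hS : ∀ i : Fin m, ∃ S : Finset (Fin n),
      (↑S : Set (Fin n)) ⊆ H.neighborSet (f i) ∩ U ∧ S.card = 10 := by
    intro i
    have hfin : (H.neighborSet (f i) ∩ U).Finite := Set.toFinite _
    have h10 : 10 ≤ hfin.toFinset.card := by
      rw [← Set.ncard_eq_toFinset_card]; exact hfnb i
    obtain ⟨S, hSsub, hScard⟩ := Finset.exists_subset_card_eq h10
    exact ⟨S, fun x hx => hfin.mem_toFinset.mp (hSsub hx), hScard⟩
  choose S hSsub hScard using hS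
  have hg : ∀ (i : Fin m) (j : Fin 10),
      ∃ a : Fin m, u a = (((S i).orderIsoOfFin (hScard i)) j : Fin n) := by
    intro i j
    apply huSurj
    exact hUfin.mem_toFinset.mpr (hSsub i (((S i).orderIsoOfFin (hScard i)) j).2).2
  choose g hgu using hg
  have hSU : ∀ i j, u (g i j) ∈ H.neighborSet (f i) ∩ U := by
    intro i j
    rw [hgu i j]
    exact hSsub i (((S i).orderIsoOfFin (hScard i)) j).2
  refine ⟨(f, u, g), ⟨?_, fun i j h => ?_⟩, ?_⟩
  · rintro ⟨i, j⟩ ⟨i', j'⟩ h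
    have h2 : s(f i, u (g i j)) = s(f i', u (g i' j')) := h
    rw [Sym2.eq_iff] at h2
    rcases h2 with ⟨h3, h4⟩ | ⟨h3, h4⟩
    · have hii : i = i' := hfInj h3
      subst hii
      have hjj : j = j' := by
        rw [hgu i j, hgu i j'] at h4
        exact ((S i).orderIsoOfFin (hScard i)).injective (Subtype.coe_injective h4)
      rw [hjj]
    · exact absurd (h3 ▸ (hSU i' j').2) (hfU i)
  · have h' : f i = u (g i j) := h
    exact hfU i (h' ▸ (hSU i j).2)
  · intro i j
    exact (hSU i j).1

lemma witEvent_prob {n m : ℕ} {p : ℝ} (hp0 : 0 ≤ p) (hp1 : p ≤ 1)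
    (μ : PMF (SimpleGraph (Fin n))) (hμ : IsGnp μ p) (ω : Wit n m) (hω : WitGood ω) :
    prEvent μ (WitEvent ω) ≤ ENNReal.ofReal (p ^ (m * 10)) := by
  classical
  set E₀ : Finset (Sym2 (Fin n)) := Finset.image (wEdge ω) Finset.univ with hE₀
  have hnd : ∀ e ∈ E₀, ¬ e.IsDiag := by
    intro e he
    obtain ⟨q, _, rfl⟩ := Finset.mem_image.mp he
    simpa [wEdge] using hω.2 q.1 q.2
  have hcard : E₀.card = m * 10 := by
    rw [hE₀, Finset.card_image_of_injective _ hω.1, Finset.card_univ, Fintype.card_prod,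
      Fintype.card_fin, Fintype.card_fin]
  have hle : prEvent μ (WitEvent ω) ≤ prEvent μ (fun H => ∀ e ∈ E₀, e ∈ H.edgeSet) := by
    apply prEvent_mono'
    intro H hH e he
    obtain ⟨q, _, rfl⟩ := Finset.mem_image.mp he
    simpa [wEdge, SimpleGraph.mem_edgeSet] using hH q.1 q.2
  rw [gnp_prob_superset hp0 hp1 μ hμ E₀ hnd, hcard] at hle
  exact hle

lemma numeric_bound (σ c : ℝ) (hσ0 : 0 < σ) (hσ : σ ≤ 1/10) (hc : 0 < c) :
    ∃ n₀ : ℕ, 1 ≤ n₀ ∧ ∀ n : ℕ, n₀ ≤ n → ∀ p : ℝ, 0 < p → p ≤ (n : ℝ) ^ (σ - 1) →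
      ∀ m : ℕ, 100 * Real.log n ≤ m → (m : ℝ) ≤ 100 * Real.log n + 1 →
        (n : ℝ) ^ m * ((n : ℝ) ^ m * ((m : ℝ) ^ 10) ^ m) * p ^ (m * 10) ≤ c / (n : ℝ) ^ 14 := by
  refine ⟨max (401 ^ 4) (⌈c⁻¹⌉₊ + 1), le_trans (by norm_num) (le_max_left _ _), ?_⟩
  intro n hn p hp0 hp m hm1 hm2
  have h401n : (401 : ℕ) ^ 4 ≤ n := le_trans (le_max_left _ _) hn
  have h401 : (401 : ℝ) ^ 4 ≤ (n : ℝ) := by exact_mod_cast h401n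
  have hn1 : (1 : ℝ) ≤ (n : ℝ) := by nlinarith
  have hnpos : (0 : ℝ) < (n : ℝ) := by linarith
  have hinv : c⁻¹ ≤ (n : ℝ) := by
    have h1 : (⌈c⁻¹⌉₊ + 1 : ℕ) ≤ n := le_trans (le_max_right _ _) hn
    have h2 : c⁻¹ ≤ (⌈c⁻¹⌉₊ : ℝ) := Nat.le_ceil _
    have h3 : ((⌈c⁻¹⌉₊ + 1 : ℕ) : ℝ) ≤ (n : ℝ) := by exact_mod_cast h1
    push_cast at h3
    linarith
  have hninvc : ((n : ℝ))⁻¹ ≤ c := by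
    rw [inv_le_comm₀ hnpos hc]
    exact hinv
  have hlog1 : 1 ≤ Real.log n := by
    rw [Real.le_log_iff_exp_le hnpos]
    have := Real.exp_one_lt_d9
    nlinarith
  have hm100 : (100 : ℝ) ≤ (m : ℝ) := by nlinarith
  have hq : (0:ℝ) < (n : ℝ) ^ ((1:ℝ)/4) := Real.rpow_pos_of_pos hnpos _
  have h4 : (401 : ℝ) ≤ (n : ℝ) ^ ((1:ℝ)/4) := by
    have h := Real.rpow_le_rpow (by positivity) h401 (by norm_num : (0:ℝ) ≤ 1/4)
    rw [← Real.rpow_natCast (401:ℝ) 4, ← Real.rpow_mul (by norm_num)] at h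
    norm_num at h
    exact h
  have hlogle : Real.log n ≤ 4 * (n : ℝ) ^ ((1:ℝ)/4) := by
    have h1 := Real.log_le_sub_one_of_pos hq
    have h2 : Real.log ((n : ℝ) ^ ((1:ℝ)/4)) = (1/4) * Real.log n := Real.log_rpow hnpos _
    rw [h2] at h1
    linarith
  have hmn : (m : ℝ) ≤ (n : ℝ) ^ ((1:ℝ)/2) := by
    have h1 : (m : ℝ) ≤ 401 * (n : ℝ) ^ ((1:ℝ)/4) := by nlinarith
    have h2 : (401:ℝ) * (n : ℝ) ^ ((1:ℝ)/4) ≤ (n : ℝ) ^ ((1:ℝ)/4) * (n : ℝ) ^ ((1:ℝ)/4) :=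
      mul_le_mul_of_nonneg_right h4 hq.le
    have h3 : (n : ℝ) ^ ((1:ℝ)/4) * (n : ℝ) ^ ((1:ℝ)/4) = (n : ℝ) ^ ((1:ℝ)/2) := by
      rw [← Real.rpow_add hnpos]; norm_num
    linarith
  have key1 : p ^ (m * 10) ≤ (n : ℝ) ^ ((σ - 1) * (m * 10 : ℕ)) := by
    calc p ^ (m * 10) ≤ ((n : ℝ) ^ (σ - 1)) ^ (m * 10) := pow_le_pow_left₀ hp0.le hp _
    _ = (n : ℝ) ^ ((σ - 1) * (m * 10 : ℕ)) := by
        rw [← Real.rpow_natCast ((n:ℝ) ^ (σ - 1)) (m * 10), ← Real.rpow_mul hnpos.le]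
  have key2 : ((m : ℝ) ^ 10) ^ m ≤ (n : ℝ) ^ ((5 : ℝ) * m) := by
    have h1 : (m : ℝ) ^ 10 ≤ ((n : ℝ) ^ ((1:ℝ)/2)) ^ 10 :=
      pow_le_pow_left₀ (Nat.cast_nonneg m) hmn 10
    have h2 : ((n : ℝ) ^ ((1:ℝ)/2)) ^ 10 = (n : ℝ) ^ (5 : ℝ) := by
      rw [← Real.rpow_natCast ((n:ℝ) ^ ((1:ℝ)/2)) 10, ← Real.rpow_mul hnpos.le]
      norm_num
    calc ((m : ℝ) ^ 10) ^ m ≤ ((n : ℝ) ^ (5:ℝ)) ^ m := by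
          rw [← h2]; exact pow_le_pow_left₀ (by positivity) h1 m
    _ = (n : ℝ) ^ ((5:ℝ) * m) := by
        rw [← Real.rpow_natCast ((n:ℝ) ^ (5:ℝ)) m, ← Real.rpow_mul hnpos.le]
  have hnm : (n : ℝ) ^ m = (n : ℝ) ^ ((m : ℕ) : ℝ) := (Real.rpow_natCast _ _).symm
  have A1 : (n:ℝ)^m * ((n:ℝ)^m * ((m:ℝ)^10)^m) ≤ (n:ℝ)^m * ((n:ℝ)^m * (n:ℝ)^((5:ℝ)*m)) :=
    mul_le_mul_of_nonneg_left (mul_le_mul_of_nonneg_left key2 (by positivity)) (by positivity)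
  have A2 : (n : ℝ) ^ m * ((n : ℝ) ^ m * ((m : ℝ) ^ 10) ^ m) * p ^ (m * 10)
      ≤ (n:ℝ)^m * ((n:ℝ)^m * (n:ℝ)^((5:ℝ)*m)) * (n:ℝ) ^ ((σ-1)*(m*10:ℕ)) :=
    mul_le_mul A1 key1 (by positivity) (by positivity)
  have A3 : (n:ℝ)^m * ((n:ℝ)^m * (n:ℝ)^((5:ℝ)*m)) * (n:ℝ) ^ ((σ-1)*(m*10:ℕ))
      = (n:ℝ) ^ (((m:ℕ):ℝ) + (((m:ℕ):ℝ) + (5:ℝ)*m) + (σ-1)*((m*10:ℕ):ℝ)) := by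
    rw [hnm, ← Real.rpow_add hnpos, ← Real.rpow_add hnpos, ← Real.rpow_add hnpos]
  have main : (n : ℝ) ^ m * ((n : ℝ) ^ m * ((m : ℝ) ^ 10) ^ m) * p ^ (m * 10)
      ≤ (n:ℝ) ^ (((m:ℕ):ℝ) + (((m:ℕ):ℝ) + (5:ℝ)*m) + (σ-1)*((m*10:ℕ):ℝ)) := A3 ▸ A2
  have expo : (((m:ℕ):ℝ) + (((m:ℕ):ℝ) + (5:ℝ)*m) + (σ-1)*((m*10:ℕ):ℝ)) ≤ -2 * m := by
    push_cast
    nlinarith [Nat.cast_nonneg (α := ℝ) m]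
  have main2 : (n:ℝ) ^ (((m:ℕ):ℝ) + (((m:ℕ):ℝ) + (5:ℝ)*m) + (σ-1)*((m*10:ℕ):ℝ))
      ≤ (n:ℝ) ^ (-2 * (m:ℝ)) :=
    Real.rpow_le_rpow_of_exponent_le hn1 expo
  have main3 : (n:ℝ) ^ (-2 * (m:ℝ)) ≤ c / (n:ℝ) ^ 14 := by
    rw [le_div_iff₀ (by positivity)]
    have h14 : (n:ℝ) ^ (14:ℕ) = (n:ℝ) ^ ((14:ℕ):ℝ) := (Real.rpow_natCast _ _).symm
    rw [h14, ← Real.rpow_add hnpos]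
    calc (n:ℝ) ^ (-2 * (m:ℝ) + ((14:ℕ):ℝ)) ≤ (n:ℝ) ^ (-1 : ℝ) := by
          apply Real.rpow_le_rpow_of_exponent_le hn1
          push_cast
          linarith
    _ = ((n:ℝ))⁻¹ := Real.rpow_neg_one _
    _ ≤ c := hninvc
  linarith

end Aux

/-- **Lemma 6.8.** There is `c* > 0` such that for every `σ ∈ (0,c*]` and every `c > 0`,
for all sufficiently large `n`: if `0 < p ≤ n^{σ−1}` and `H ~ G(n,p)`, then with
probability at least `1 − c n⁻¹⁴`, for every `U ⊆ [n]` with `|U| ≤ 100 log n`, the number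
of vertices `v ∉ U` with at least `10` `H`-neighbours in `U` is at most `100 log n`. -/
theorem few_vertices_many_neighbours :
    ∃ cstar : ℝ, 0 < cstar ∧
      ∀ σ : ℝ, 0 < σ → σ ≤ cstar →
        ∀ c : ℝ, 0 < c →
          ∃ n₀ : ℕ, ∀ n : ℕ, n₀ ≤ n →
            ∀ p : ℝ, 0 < p → p ≤ (n : ℝ) ^ (σ - 1) →
              ∀ μ : PMF (SimpleGraph (Fin n)), IsGnp μ p →
                ENNReal.ofReal (1 - c / (n : ℝ) ^ 14) ≤
                  prEvent μ (fun H =>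
                    ∀ U : Set (Fin n), (U.ncard : ℝ) ≤ 100 * Real.log n →
                      ({v : Fin n | v ∉ U ∧
                          10 ≤ (H.neighborSet v ∩ U).ncard}.ncard : ℝ) ≤
                        100 * Real.log n) := by
  classical
  refine ⟨1/10, by norm_num, ?_⟩
  intro σ hσ0 hσc c hc
  obtain ⟨n₀, hn₀1, hnum⟩ := numeric_bound σ c hσ0 hσc hc
  refine ⟨n₀, ?_⟩
  intro n hn p hp0 hpσ μ hμ
  have hn1 : 1 ≤ n := le_trans hn₀1 hn
  have hn1R : (1:ℝ) ≤ (n:ℝ) := by exact_mod_cast hn1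
  have hp1 : p ≤ 1 := le_trans hpσ
    (Real.rpow_le_one_of_one_le_of_nonpos hn1R (by linarith))
  set L := 100 * Real.log n with hL
  have hL0 : 0 ≤ L := by
    have := Real.log_nonneg hn1R
    rw [hL]; linarith
  set m : ℕ := ⌊L⌋₊ + 1 with hm
  have hm1 : L ≤ (m:ℝ) := by
    have := Nat.lt_floor_add_one L
    rw [hm]
    push_cast
    linarith
  have hm2 : (m:ℝ) ≤ L + 1 := by
    have := Nat.floor_le hL0
    rw [hm]
    push_cast
    linarith
  set Pred : SimpleGraph (Fin n) → Prop := fun H =>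
    ∀ U : Set (Fin n), (U.ncard : ℝ) ≤ L →
      ({v : Fin n | v ∉ U ∧ 10 ≤ (H.neighborSet v ∩ U).ncard}.ncard : ℝ) ≤ L
    with hPred
  have key : prEvent μ (fun H => ¬ Pred H) ≤ ENNReal.ofReal (c / (n:ℝ) ^ 14) := by
    have step1 : prEvent μ (fun H => ¬ Pred H) ≤
        prEvent μ (fun H => ∃ ω ∈ Finset.univ.filter (fun ω : Wit n m => WitGood ω),
          WitEvent ω H) := by
      apply prEvent_mono'
      intro H hH
      have hH2 : ¬ ∀ U : Set (Fin n), (U.ncard : ℝ) ≤ L →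
          ({v : Fin n | v ∉ U ∧ 10 ≤ (H.neighborSet v ∩ U).ncard}.ncard : ℝ) ≤ L := hH
      push_neg at hH2
      obtain ⟨U, hU1, hU2⟩ := hH2
      have hUfl : U.ncard ≤ ⌊L⌋₊ := Nat.le_floor hU1
      have hUlt : U.ncard < m := by omega
      have hBge : m ≤ {v : Fin n | v ∉ U ∧ 10 ≤ (H.neighborSet v ∩ U).ncard}.ncard := by
        by_contra hcon
        push_neg at hcon
        have h0 : {v : Fin n | v ∉ U ∧ 10 ≤ (H.neighborSet v ∩ U).ncard}.ncard ≤ ⌊L⌋₊ := by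
          omega
        have h1 : ({v : Fin n | v ∉ U ∧ 10 ≤ (H.neighborSet v ∩ U).ncard}.ncard : ℝ)
            ≤ (⌊L⌋₊ : ℝ) := by exact_mod_cast h0
        have h2 : ((⌊L⌋₊:ℝ)) ≤ L := Nat.floor_le hL0
        exact absurd (le_trans h1 h2) (not_le.mpr hU2)
      obtain ⟨ω, hgood, hev⟩ := witness_exists H U hUlt hBge
      exact ⟨ω, Finset.mem_filter.mpr ⟨Finset.mem_univ _, hgood⟩, hev⟩
    refine le_trans step1 (le_trans (prEvent_union_le' μ _ _) ?_)
    have step2 : ∑ ω ∈ Finset.univ.filter (fun ω : Wit n m => WitGood ω), prEvent μ (WitEvent ω)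
        ≤ ∑ _ω ∈ Finset.univ.filter (fun ω : Wit n m => WitGood ω),
            ENNReal.ofReal (p ^ (m*10)) :=
      Finset.sum_le_sum fun ω hω =>
        witEvent_prob hp0.le hp1 μ hμ ω (Finset.mem_filter.mp hω).2
    refine le_trans step2 ?_
    rw [Finset.sum_const]
    have hcardle : (Finset.univ.filter (fun ω : Wit n m => WitGood ω)).card
        ≤ Fintype.card (Wit n m) := by
      rw [← Finset.card_univ]
      exact Finset.card_filter_le _ _
    calc (Finset.univ.filter (fun ω : Wit n m => WitGood ω)).card
          • ENNReal.ofReal (p ^ (m*10))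
        ≤ (Fintype.card (Wit n m)) • ENNReal.ofReal (p ^ (m*10)) := by
          rw [nsmul_eq_mul, nsmul_eq_mul]
          exact mul_le_mul_left (by exact_mod_cast hcardle) _
    _ = ENNReal.ofReal ((Fintype.card (Wit n m) : ℝ) * p ^ (m*10)) := by
          rw [nsmul_eq_mul, ← ENNReal.ofReal_natCast (Fintype.card (Wit n m)),
            ← ENNReal.ofReal_mul (Nat.cast_nonneg _)]
    _ ≤ ENNReal.ofReal (c / (n:ℝ) ^ 14) := by
          apply ENNReal.ofReal_le_ofReal
          have hcard : Fintype.card (Wit n m) = n ^ m * (n ^ m * (m ^ 10) ^ m) := by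
            simp [Fintype.card_prod, Fintype.card_fun, Fintype.card_fin, pow_mul]
          rw [hcard]
          have hm1' : 100 * Real.log n ≤ (m:ℝ) := by rw [← hL]; exact hm1
          have hm2' : (m:ℝ) ≤ 100 * Real.log n + 1 := by rw [← hL]; exact hm2
          have := hnum n hn p hp0 hpσ m hm1' hm2'
          push_cast
          convert this using 2 <;> push_cast <;> ring
  have hsplit := prEvent_add_not' μ Pred
  have hner : prEvent μ (fun H => ¬ Pred H) ≠ ⊤ :=
    ne_top_of_le_ne_top ENNReal.ofReal_ne_top key
  have hgoodeq : prEvent μ Pred = 1 - prEvent μ (fun H => ¬ Pred H) :=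
    ENNReal.eq_sub_of_add_eq hner hsplit
  calc ENNReal.ofReal (1 - c / (n:ℝ) ^ 14)
      = ENNReal.ofReal 1 - ENNReal.ofReal (c / (n:ℝ) ^ 14) :=
        ENNReal.ofReal_sub _ (by positivity)
  _ = 1 - ENNReal.ofReal (c / (n:ℝ) ^ 14) := by rw [ENNReal.ofReal_one]
  _ ≤ 1 - prEvent μ (fun H => ¬ Pred H) := tsub_le_tsub_left key 1
  _ = prEvent μ Pred := hgoodeq.symm


end Sandwich
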